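/- For the linearized stochastic swing system on the star graph with root node 1, all edges of weight γ, M = ηI, D = dI, and a single disturbance at the root (b₁ ≠ 0, b_i = 0 for i ≥ 2), the invariant-distribution variances are q_{ω,11} = [1/(2dη) − γ(n−1)/(dn(2d²+γηn))]b₁², q_{ω,ii} = γb₁²/(dn(2d²+γηn)) for i ≥ 2, and q_{δ,kk} = b₁²/(2dγn) for every line k; these coincide with the corresponding formulas for the complete graph with a single disturbed node. -/

import Mathlib

open Matrix

/-- Bilinear sums against a rank-two matrix factor. -/
lemma bilin_eval {N : ℕ} (u v : Fin N → ℝ) (R : Matrix (Fin N) (Fin N) ℝ) (p q a b : Fin N → ℝ)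
    (hR : ∀ i j, R i j = p i * a j + q i * b j) :
    ∑ j, (∑ i, u i * R i j) * v j =
      (∑ i, u i * p i) * (∑ j, a j * v j) + (∑ i, u i * q i) * (∑ j, b j * v j) := by
  simp only [hR]
  have h1 : ∀ j, ∑ i, u i * (p i * a j + q i * b j)
      = (∑ i, u i * p i) * a j + (∑ i, u i * q i) * b j := by
    intro j
    rw [Finset.sum_mul, Finset.sum_mul, ← Finset.sum_add_distrib]
    exact Finset.sum_congr rfl fun i _ => by ring
  simp only [h1, add_mul]
  rw [Finset.sum_add_distrib, Finset.mul_sum, Finset.mul_sum]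
  congr 1 <;> exact Finset.sum_congr rfl fun j _ => by ring

lemma arith1 (η d γ b1 N : ℝ) (hη : 0 < η) (hd : 0 < d) (hγ : 0 < γ) (hN : 0 < N) :
    (1/η) * ((b1^2/η/(2*(d/η)) * (1/N) + (b1^2/η) * ((d/η)/(γ*N/η + 2*(d/η)^2)) * ((1:ℝ) - 1/N)) * (1/N)
      + ((b1^2/η) * ((d/η)/(γ*N/η + 2*(d/η)^2)) * (1/N) + b1^2/η/(2*(d/η)) * ((1:ℝ) - 1/N)) * ((1:ℝ) - 1/N))
    = (1 / (2*d*η) - γ*(N-1)/(d*N*(2*d^2 + γ*η*N))) * b1^2 := by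
  have h1 : (2*d^2 + γ*η*N) ≠ 0 := by positivity
  have h2 : γ*N/η + 2*(d/η)^2 ≠ 0 := by positivity
  field_simp
  ring

lemma arith2 (η d γ b1 N : ℝ) (hη : 0 < η) (hd : 0 < d) (hγ : 0 < γ) (hN : 0 < N) :
    (1/η) * ((b1^2/η/(2*(d/η)) * (1/N) + (b1^2/η) * ((d/η)/(γ*N/η + 2*(d/η)^2)) * ((0:ℝ) - 1/N)) * (1/N)
      + ((b1^2/η) * ((d/η)/(γ*N/η + 2*(d/η)^2)) * (1/N) + b1^2/η/(2*(d/η)) * ((0:ℝ) - 1/N)) * ((0:ℝ) - 1/N))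
    = γ * b1^2 / (d*N*(2*d^2 + γ*η*N)) := by
  have h1 : (2*d^2 + γ*η*N) ≠ 0 := by positivity
  have h2 : γ*N/η + 2*(d/η)^2 ≠ 0 := by positivity
  field_simp
  ring

lemma arith3 (η d γ b1 N : ℝ) (hη : 0 < η) (hd : 0 < d) (hγ : 0 < γ) (hN : 0 < N) :
    (1/η) * ((b1^2/η)/(2*(d/η)*(γ*N/η))) = b1^2/(2*d*γ*N) := by
  field_simp

/-- Star graph on `m+1` nodes (root `0`), uniform edge weight `γ`, `M = ηI`, `D = dI`,
single disturbance `b₁` at the root: the invariant-distribution frequency and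
phase-difference variances coincide with the complete-graph formulas. -/
theorem stmt_16 (m : ℕ) (hm : 2 ≤ m) (η d γ b1 : ℝ)
    (hη : 0 < η) (hd : 0 < d) (hγ : 0 < γ) (hb1 : b1 ≠ 0)
    (L U : Matrix (Fin (m + 1)) (Fin (m + 1)) ℝ)
    (hL : ∀ i j, L i j =
      if i = j then (if i = 0 then γ * (m : ℝ) else γ)
      else (if i = 0 ∨ j = 0 then -γ else 0))
    (hU1 : U * Uᵀ = 1) (hU2 : Uᵀ * U = 1)
    (lam : Fin (m + 1) → ℝ)
    (hdiag : Uᵀ * ((1 / η) • L) * U = Matrix.diagonal lam)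
    (hlam0 : lam 0 = 0) (hlampos : ∀ i : Fin (m + 1), i ≠ 0 → 0 < lam i) :
    let n : ℝ := (m : ℝ) + 1
    let α := d / η
    let B2 : Matrix (Fin (m + 1)) (Fin (m + 1)) ℝ :=
      Matrix.diagonal fun i => if i = 0 then b1 ^ 2 else 0
    let W := Uᵀ * ((1 / η) • B2) * U
    let χ : Fin (m + 1) → Fin (m + 1) → ℝ :=
      fun i j => (lam i - lam j) ^ 2 + 2 * α ^ 2 * (lam i + lam j)
    let R : Matrix (Fin (m + 1)) (Fin (m + 1)) ℝ :=
      Matrix.of fun i j =>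
        if i = 0 ∧ j = 0 then W 0 0 / (2 * α)
        else (α * (lam i + lam j) / χ i j) * W i j
    let Qω := (1 / η) • (U * R * Uᵀ)
    let G : Matrix (Fin m) (Fin m) ℝ :=
      Matrix.of fun k q => (2 * α / χ k.succ q.succ) * W k.succ q.succ
    let Uhat : Matrix (Fin (m + 1)) (Fin m) ℝ := Matrix.of fun i k => U i k.succ
    let C : Matrix (Fin (m + 1)) (Fin m) ℝ :=
      Matrix.of fun i k => if i = 0 then 1 else if i = k.succ then -1 else 0
    let Qδ := Cᵀ * ((1 / η) • (Uhat * G * Uhatᵀ)) * C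
    Qω 0 0 = (1 / (2 * d * η) - γ * (n - 1) / (d * n * (2 * d ^ 2 + γ * η * n))) * b1 ^ 2 ∧
    (∀ i : Fin (m + 1), i ≠ 0 →
      Qω i i = γ * b1 ^ 2 / (d * n * (2 * d ^ 2 + γ * η * n))) ∧
    (∀ k : Fin m, Qδ k k = b1 ^ 2 / (2 * d * γ * n)) := by
  intro n α B2 W χ R Qω G Uhat C Qδ
  have hηne : η ≠ 0 := ne_of_gt hη
  have hdne : d ≠ 0 := ne_of_gt hd
  have hγne : γ ≠ 0 := ne_of_gt hγ
  have hn : (0:ℝ) < n := by positivity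
  have hnne : n ≠ 0 := ne_of_gt hn
  have hα : 0 < α := by positivity
  have hαne : α ≠ 0 := ne_of_gt hα
  set μ : ℝ := γ * n / η with hμdef
  have hμ : 0 < μ := by positivity
  have hμne : μ ≠ 0 := ne_of_gt hμ
  -- entry lemmas for L
  have L00 : L 0 0 = γ * m := by rw [hL]; simp
  have L0j : ∀ j : Fin (m+1), j ≠ 0 → L 0 j = -γ := by
    intro j hj
    rw [hL]; simp [Ne.symm hj]
  have Li0 : ∀ i : Fin (m+1), i ≠ 0 → L i 0 = -γ := by
    intro i hi
    rw [hL]; simp [hi]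
  have Lii : ∀ i : Fin (m+1), i ≠ 0 → L i i = γ := by
    intro i hi
    rw [hL]; simp [hi]
  have Lij : ∀ i j : Fin (m+1), i ≠ 0 → j ≠ 0 → i ≠ j → L i j = 0 := by
    intro i j hi hj hij
    rw [hL]; simp [hi, hj, hij]
  -- A * U = U * D
  have hA : ((1 / η) • L) * U = U * Matrix.diagonal lam := by
    calc ((1 / η) • L) * U = (U * Uᵀ) * (((1 / η) • L) * U) := by rw [hU1, one_mul]
    _ = U * (Uᵀ * ((1 / η) • L) * U) := by rw [Matrix.mul_assoc, Matrix.mul_assoc]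
    _ = U * Matrix.diagonal lam := by rw [hdiag]
  -- A = U D Uᵀ
  have hAd : (1 / η) • L = U * Matrix.diagonal lam * Uᵀ := by
    calc (1 / η) • L = ((1 / η) • L) * (U * Uᵀ) := by rw [hU1, Matrix.mul_one]
    _ = (((1 / η) • L) * U) * Uᵀ := by rw [Matrix.mul_assoc]
    _ = U * Matrix.diagonal lam * Uᵀ := by rw [hA]
  -- entrywise form of hA
  have hAU_entry : ∀ i j, (1 / η) * ∑ k, L i k * U k j = U i j * lam j := by
    intro i j
    have h := congrFun (congrFun hA i) j
    simp only [Matrix.mul_apply, Matrix.smul_apply, Matrix.diagonal_apply, smul_eq_mul,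
      mul_ite, mul_zero] at h
    rw [Finset.sum_ite_eq' Finset.univ j (fun k => U i k * lam k)] at h
    simp only [Finset.mem_univ, if_true] at h
    rw [← h, Finset.mul_sum]
    exact Finset.sum_congr rfl fun k _ => by ring
  -- column 0 of U is constant
  have hcol : ∀ i, U i 0 = U 0 0 := by
    intro i
    by_cases hi : i = 0
    · rw [hi]
    · have h := hAU_entry i 0
      rw [hlam0, mul_zero] at h
      have hsummand : ∀ k, L i k * U k 0 =
          (if k = 0 then -γ * U 0 0 else 0) + (if k = i then γ * U i 0 else 0) := by
        intro k
        by_cases hk0 : k = 0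
        · subst hk0
          rw [Li0 i hi, if_pos rfl, if_neg (Ne.symm hi)]
          ring
        · by_cases hki : k = i
          · subst hki
            rw [Lii k hi, if_neg hk0, if_pos rfl]
            ring
          · rw [Lij i k hi hk0 (fun h' => hki h'.symm), if_neg hk0, if_neg hki]
            ring
      rw [Finset.sum_congr rfl (fun k _ => hsummand k), Finset.sum_add_distrib,
        Finset.sum_ite_eq' Finset.univ (0 : Fin (m+1)) (fun _ => -γ * U 0 0),
        Finset.sum_ite_eq' Finset.univ i (fun _ => γ * U i 0)] at h
      simp only [Finset.mem_univ, if_true] at h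
      rcases mul_eq_zero.mp h with h' | h'
      · exact absurd h' (one_div_ne_zero hηne)
      · have h4 : γ * (U i 0 - U 0 0) = 0 := by linarith
        rcases mul_eq_zero.mp h4 with h'' | h''
        · exact absurd h'' hγne
        · linarith
  -- row sums of L vanish
  have hrow : ∀ k, ∑ l, L k l = 0 := by
    intro k
    by_cases hk : k = 0
    · subst hk
      have hs : ∀ l : Fin (m+1), L 0 l = (if l = 0 then γ * m + γ else 0) + (-γ) := by
        intro l
        by_cases hl : l = 0
        · subst hl; rw [L00, if_pos rfl]; ring
        · rw [L0j l hl, if_neg hl]; ring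
      rw [Finset.sum_congr rfl (fun l _ => hs l), Finset.sum_add_distrib,
        Finset.sum_ite_eq' Finset.univ (0 : Fin (m+1)) (fun _ => γ * m + γ),
        Finset.sum_const]
      simp only [Finset.mem_univ, if_true, Finset.card_univ, Fintype.card_fin, nsmul_eq_mul]
      push_cast
      ring
    · have hs : ∀ l : Fin (m+1), L k l =
          (if l = k then γ else 0) + (if l = 0 then -γ else 0) := by
        intro l
        by_cases hlk : l = k
        · subst hlk
          rw [Lii l hk, if_pos rfl, if_neg hk]
          ring
        · by_cases hl0 : l = 0
          · subst hl0
            rw [Li0 k hk, if_neg (fun h' : (0:Fin (m+1)) = k => hk h'.symm), if_pos rfl]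
            ring
          · rw [Lij k l hk hl0 (fun h' => hlk h'.symm), if_neg hlk, if_neg hl0]
            ring
      rw [Finset.sum_congr rfl (fun l _ => hs l), Finset.sum_add_distrib,
        Finset.sum_ite_eq' Finset.univ k (fun _ => γ),
        Finset.sum_ite_eq' Finset.univ (0 : Fin (m+1)) (fun _ => -γ)]
      simp
  -- L² column 0
  have hLLcol : ∀ k, ∑ l, L k l * L l 0 = γ * ((m:ℝ) + 1) * L k 0 := by
    intro k
    have h1 : ∀ l, L k l * L l 0 =
        L k l * (-γ) + (if l = 0 then L k 0 * (γ * m + γ) else 0) := by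
      intro l
      by_cases hl : l = 0
      · subst hl
        rw [L00, if_pos rfl]
        ring
      · rw [Li0 l hl, if_neg hl]
        ring
    rw [Finset.sum_congr rfl (fun l _ => h1 l), Finset.sum_add_distrib, ← Finset.sum_mul,
      hrow k, Finset.sum_ite_eq' Finset.univ (0 : Fin (m+1)) (fun _ => L k 0 * (γ * m + γ))]
    simp only [Finset.mem_univ, if_true, zero_mul, zero_add]
    ring
  have hnval : n = (m:ℝ) + 1 := rfl
  -- Uᵀ A = D Uᵀ
  have hUtA : Uᵀ * ((1 / η) • L) = Matrix.diagonal lam * Uᵀ := by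
    calc Uᵀ * ((1 / η) • L) = Uᵀ * (U * Matrix.diagonal lam * Uᵀ) := by rw [← hAd]
    _ = ((Uᵀ * U) * Matrix.diagonal lam) * Uᵀ := by
        rw [← Matrix.mul_assoc, ← Matrix.mul_assoc]
    _ = Matrix.diagonal lam * Uᵀ := by rw [hU2, one_mul]
  have hDmul : ∀ (M : Matrix (Fin (m+1)) (Fin (m+1)) ℝ) (i j' : Fin (m+1)),
      (Matrix.diagonal lam * M) i j' = lam i * M i j' := by
    intro M i j'
    rw [Matrix.mul_apply]
    simp [Matrix.diagonal_apply, ite_mul, zero_mul, Finset.sum_ite_eq]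
  have hUtA_entry : ∀ j, (1 / η) * ∑ k, U k j * L k 0 = lam j * U 0 j := by
    intro j
    have h := congrFun (congrFun hUtA j) 0
    rw [hDmul Uᵀ j 0] at h
    simp only [Matrix.mul_apply, Matrix.smul_apply, Matrix.transpose_apply, smul_eq_mul] at h
    rw [← h, Finset.mul_sum]
    exact Finset.sum_congr rfl fun k _ => by ring
  -- (A*A) column 0 = μ * A column 0
  have hAA_entry : ∀ k, ((((1 / η) • L) * ((1 / η) • L))) k 0 = μ * (((1 / η) • L) k 0) := by
    intro k
    simp only [Matrix.mul_apply, Matrix.smul_apply, smul_eq_mul]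
    rw [Finset.sum_congr rfl (fun l _ =>
      show (1/η * L k l) * (1/η * L l 0) = (1/η) * (1/η) * (L k l * L l 0) from by ring),
      ← Finset.mul_sum, hLLcol k, hμdef, hnval]
    field_simp
  have hUtAA : Uᵀ * (((1 / η) • L) * ((1 / η) • L))
      = Matrix.diagonal lam * (Matrix.diagonal lam * Uᵀ) := by
    rw [← Matrix.mul_assoc, hUtA, Matrix.mul_assoc, hUtA]
  have hquad : ∀ j, lam j * (lam j * U 0 j) = μ * (lam j * U 0 j) := by
    intro j
    have h := congrFun (congrFun hUtAA j) 0
    have e2 : (Matrix.diagonal lam * (Matrix.diagonal lam * Uᵀ)) j 0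
        = lam j * (lam j * U 0 j) := by
      rw [hDmul, hDmul]
      rfl
    have e1 : (Uᵀ * (((1 / η) • L) * ((1 / η) • L))) j 0 = μ * (lam j * U 0 j) := by
      rw [Matrix.mul_apply]
      rw [Finset.sum_congr rfl (fun k _ => by rw [hAA_entry k])]
      simp only [Matrix.transpose_apply, Matrix.smul_apply, smul_eq_mul]
      rw [Finset.sum_congr rfl (fun k _ =>
        show U k j * (μ * (1/η * L k 0)) = μ * (1/η * (U k j * L k 0)) from by ring),
        ← Finset.mul_sum, ← Finset.mul_sum, hUtA_entry j]
    rw [← e2, ← h, e1]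
  -- orthonormality sums
  have hUU : ∀ a, ∑ j, U a j * U 0 j = if a = (0 : Fin (m+1)) then 1 else 0 := by
    intro a
    have h := congrFun (congrFun hU1 a) 0
    simp only [Matrix.mul_apply, Matrix.transpose_apply, Matrix.one_apply] at h
    exact h
  have hsum1 : ∑ j, U 0 j * U 0 j = 1 := by
    have h := hUU 0
    simpa using h
  -- the moment identity
  have hmom : ∑ j, lam j * (U 0 j * U 0 j) = γ * m / η := by
    have h := congrFun (congrFun hAd 0) 0
    simp only [Matrix.smul_apply, smul_eq_mul, L00] at h
    rw [Matrix.mul_apply] at h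
    rw [Finset.sum_congr rfl (fun j _ => by rw [Matrix.mul_diagonal])] at h
    simp only [Matrix.transpose_apply] at h
    rw [Finset.sum_congr rfl (fun j _ =>
      show U 0 j * lam j * U 0 j = lam j * (U 0 j * U 0 j) from by ring)] at h
    rw [← h]
    ring
  have hkey : ∀ j, j ≠ 0 → lam j * (U 0 j * U 0 j) = μ * (U 0 j * U 0 j) := by
    intro j hj
    have h := hquad j
    have hl : lam j ≠ 0 := (hlampos j hj).ne'
    have h2 : lam j * ((lam j - μ) * U 0 j) = 0 := by
      have : lam j * ((lam j - μ) * U 0 j)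
          = lam j * (lam j * U 0 j) - μ * (lam j * U 0 j) := by ring
      rw [this, h, sub_self]
    rcases mul_eq_zero.mp h2 with h' | h'
    · exact absurd h' hl
    · rcases mul_eq_zero.mp h' with h'' | h''
      · rw [show lam j = μ from by linarith]
      · rw [h'']
        ring
  -- variance of the 0-mode
  have hw0 : U 0 0 * U 0 0 = 1 / n := by
    have h1 := hmom
    rw [Fin.sum_univ_succ, hlam0, zero_mul, zero_add] at h1
    rw [Finset.sum_congr rfl (fun p _ => hkey p.succ (Fin.succ_ne_zero p)),
      ← Finset.mul_sum] at h1
    have h3 := hsum1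
    rw [Fin.sum_univ_succ] at h3
    set S := ∑ p : Fin m, U 0 p.succ * U 0 p.succ with hSdef
    rw [hμdef, hnval] at h1
    have hm1 : (0:ℝ) < (m:ℝ) + 1 := by positivity
    have hS : S = (m:ℝ) / ((m:ℝ) + 1) := by
      field_simp at h1 ⊢
      nlinarith [h1]
    rw [hS] at h3
    rw [hnval]
    field_simp at h3 ⊢
    linarith
  -- W entries
  have hW : ∀ i j, W i j = (b1^2/η) * (U 0 i * U 0 j) := by
    intro i j
    simp only [W, B2, Matrix.mul_apply, Matrix.smul_apply, smul_eq_mul,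
      Matrix.diagonal_apply, Matrix.transpose_apply, mul_ite, mul_zero, ite_mul, zero_mul,
      Finset.sum_ite_eq', Finset.sum_ite_eq, Finset.mem_univ, if_true]
    ring
  -- eigenvalue dichotomy
  have hlamval : ∀ j, j ≠ 0 → U 0 j ≠ 0 → lam j = μ := by
    intro j hj hU0j
    have h := hquad j
    have hl : lam j ≠ 0 := (hlampos j hj).ne'
    have h2 : lam j * ((lam j - μ) * U 0 j) = 0 := by
      have e : lam j * ((lam j - μ) * U 0 j)
          = lam j * (lam j * U 0 j) - μ * (lam j * U 0 j) := by ring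
      rw [e, h, sub_self]
    rcases mul_eq_zero.mp h2 with h' | h'
    · exact absurd h' hl
    · rcases mul_eq_zero.mp h' with h'' | h''
      · linarith
      · exact absurd h'' hU0j
  set av : Fin (m+1) → ℝ := fun i => if i = 0 then U 0 0 else 0 with havdef
  set bv : Fin (m+1) → ℝ := fun i => if i = 0 then 0 else U 0 i with hbvdef
  set c1 : ℝ := b1^2/η/(2*α) with hc1
  set c2 : ℝ := (b1^2/η) * (α/(μ + 2*α^2)) with hc2
  have hμ2α : μ + 2*α^2 ≠ 0 := by positivity
  -- pointwise rank-two formula for R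
  have hR : ∀ i j, R i j = (c1 * av i + c2 * bv i) * av j + (c2 * av i + c1 * bv i) * bv j := by
    intro i j
    simp only [R, Matrix.of_apply]
    by_cases hi : i = 0 <;> by_cases hj : j = 0
    · subst hi; subst hj
      rw [if_pos ⟨rfl, rfl⟩, hW 0 0]
      simp only [havdef, hbvdef, if_pos rfl]
      rw [hc1]; ring
    · subst hi
      rw [if_neg (by simp [hj]), hW 0 j]
      simp only [havdef, hbvdef, if_pos rfl, if_neg hj]
      by_cases hz : U 0 j = 0
      · rw [hz]; ring
      · simp only [χ]
        rw [hlam0, hlamval j hj hz]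
        have hχne : (0 - μ)^2 + 2*α^2*(0+μ) ≠ 0 := by
          have e : (0 - μ)^2 + 2*α^2*(0+μ) = μ^2 + 2*α^2*μ := by ring
          rw [e]; positivity
        have hcoef : α * (0 + μ) / ((0 - μ)^2 + 2*α^2*(0+μ)) = α/(μ+2*α^2) := by
          rw [div_eq_div_iff hχne hμ2α]; ring
        rw [hcoef, hc2]; ring
    · subst hj
      rw [if_neg (by simp [hi]), hW i 0]
      simp only [havdef, hbvdef, if_pos rfl, if_neg hi]
      by_cases hz : U 0 i = 0
      · rw [hz]; ring
      · simp only [χ]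
        rw [hlam0, hlamval i hi hz]
        have hχne : (μ - 0)^2 + 2*α^2*(μ+0) ≠ 0 := by
          have e : (μ - 0)^2 + 2*α^2*(μ+0) = μ^2 + 2*α^2*μ := by ring
          rw [e]; positivity
        have hcoef : α * (μ + 0) / ((μ - 0)^2 + 2*α^2*(μ+0)) = α/(μ+2*α^2) := by
          rw [div_eq_div_iff hχne hμ2α]; ring
        rw [hcoef, hc2]; ring
    · rw [if_neg (by simp [hi]), hW i j]
      simp only [havdef, hbvdef, if_neg hi, if_neg hj]
      by_cases hzi : U 0 i = 0
      · rw [hzi]; ring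
      · by_cases hzj : U 0 j = 0
        · rw [hzj]; ring
        · simp only [χ]
          rw [hlamval i hi hzi, hlamval j hj hzj]
          have hχne : (μ - μ)^2 + 2*α^2*(μ+μ) ≠ 0 := by
            have e : (μ - μ)^2 + 2*α^2*(μ+μ) = 4*α^2*μ := by ring
            rw [e]; positivity
          have h2α : (2*α) ≠ 0 := by positivity
          have hcoef : α * (μ + μ) / ((μ - μ)^2 + 2*α^2*(μ+μ)) = 1/(2*α) := by
            rw [div_eq_div_iff hχne h2α]; ring
          rw [hcoef, hc1]; ring
  -- the basic sums
  have hXa : ∀ a, ∑ i, U a i * av i = U 0 0 * U 0 0 := by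
    intro a
    simp only [havdef, mul_ite, mul_zero]
    rw [Finset.sum_ite_eq' Finset.univ (0 : Fin (m+1)) (fun i => U a i * U 0 0)]
    simp [hcol a]
  have hXa' : ∀ a, ∑ j, av j * U a j = U 0 0 * U 0 0 := by
    intro a
    rw [Finset.sum_congr rfl (fun j _ => mul_comm (av j) (U a j))]
    exact hXa a
  have hYa : ∀ a, ∑ i, U a i * bv i = (if a = (0:Fin (m+1)) then (1:ℝ) else 0) - U 0 0 * U 0 0 := by
    intro a
    have e : ∀ i, U a i * bv i = U a i * U 0 i - U a i * av i := by
      intro i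
      simp only [havdef, hbvdef]
      by_cases hi : i = 0 <;> simp [hi]
    rw [Finset.sum_congr rfl (fun i _ => e i), Finset.sum_sub_distrib, hUU a, hXa a]
  have hYa' : ∀ a, ∑ j, bv j * U a j = (if a = (0:Fin (m+1)) then (1:ℝ) else 0) - U 0 0 * U 0 0 := by
    intro a
    rw [Finset.sum_congr rfl (fun j _ => mul_comm (bv j) (U a j))]
    exact hYa a
  -- diagonal entries of Qω
  have hQω : ∀ a : Fin (m+1), Qω a a =
      (1/η) * ((c1 * (1/n) + c2 * ((if a = (0:Fin (m+1)) then (1:ℝ) else 0) - 1/n)) * (1/n)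
        + (c2 * (1/n) + c1 * ((if a = (0:Fin (m+1)) then (1:ℝ) else 0) - 1/n))
          * ((if a = (0:Fin (m+1)) then (1:ℝ) else 0) - 1/n)) := by
    intro a
    simp only [Qω, Matrix.smul_apply, smul_eq_mul]
    congr 1
    have e : (U * R * Uᵀ) a a = ∑ j, (∑ i, U a i * R i j) * U a j := by
      rw [Matrix.mul_apply]
      exact Finset.sum_congr rfl fun j _ => by rw [Matrix.mul_apply, Matrix.transpose_apply]
    rw [e, bilin_eval (fun i => U a i) (fun j => U a j) R
      (fun i => c1 * av i + c2 * bv i) (fun i => c2 * av i + c1 * bv i) av bv hR]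
    have e1 : ∑ i, U a i * (c1 * av i + c2 * bv i)
        = c1 * (U 0 0 * U 0 0) + c2 * ((if a = (0:Fin (m+1)) then (1:ℝ) else 0) - U 0 0 * U 0 0) := by
      rw [Finset.sum_congr rfl (fun i _ =>
        show U a i * (c1 * av i + c2 * bv i)
          = c1 * (U a i * av i) + c2 * (U a i * bv i) from by ring),
        Finset.sum_add_distrib, ← Finset.mul_sum, ← Finset.mul_sum, hXa a, hYa a]
    have e2 : ∑ i, U a i * (c2 * av i + c1 * bv i)
        = c2 * (U 0 0 * U 0 0) + c1 * ((if a = (0:Fin (m+1)) then (1:ℝ) else 0) - U 0 0 * U 0 0) := by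
      rw [Finset.sum_congr rfl (fun i _ =>
        show U a i * (c2 * av i + c1 * bv i)
          = c2 * (U a i * av i) + c1 * (U a i * bv i) from by ring),
        Finset.sum_add_distrib, ← Finset.mul_sum, ← Finset.mul_sum, hXa a, hYa a]
    rw [e1, e2, hXa' a, hYa' a, hw0]
  -- Qδ machinery
  set c3 : ℝ := (b1^2/η)/(2*α*μ) with hc3
  have hG : ∀ p q : Fin m, G p q = (c3 * bv p.succ) * bv q.succ + 0 * (0:ℝ) := by
    intro p q
    have hp0 : (p.succ : Fin (m+1)) ≠ 0 := Fin.succ_ne_zero p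
    have hq0 : (q.succ : Fin (m+1)) ≠ 0 := Fin.succ_ne_zero q
    simp only [G, Matrix.of_apply]
    rw [hW]
    simp only [hbvdef, if_neg hp0, if_neg hq0]
    by_cases hz : U 0 p.succ = 0
    · rw [hz]; ring
    · by_cases hz' : U 0 q.succ = 0
      · rw [hz']; ring
      · simp only [χ]
        rw [hlamval _ hp0 hz, hlamval _ hq0 hz']
        have hχne : (μ - μ)^2 + 2*α^2*(μ+μ) ≠ 0 := by
          have e : (μ - μ)^2 + 2*α^2*(μ+μ) = 4*α^2*μ := by ring
          rw [e]; positivity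
        have h2αμ : (2*α*μ) ≠ 0 := by positivity
        have hcoef : 2*α / ((μ - μ)^2 + 2*α^2*(μ+μ)) = 1/(2*α*μ) := by
          rw [div_eq_div_iff hχne h2αμ]; ring
        rw [hcoef, hc3]; ring
  have hT : ∀ a, ∑ p : Fin m, U a p.succ * bv p.succ
      = (if a = (0:Fin (m+1)) then (1:ℝ) else 0) - 1/n := by
    intro a
    have h := hYa a
    rw [Fin.sum_univ_succ] at h
    have hbv0 : bv 0 = 0 := by simp [hbvdef]
    rw [hbv0, mul_zero, zero_add, hw0] at h
    exact h
  have hT' : ∀ a, ∑ q : Fin m, bv q.succ * U a q.succ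
      = (if a = (0:Fin (m+1)) then (1:ℝ) else 0) - 1/n := by
    intro a
    rw [Finset.sum_congr rfl (fun q _ => mul_comm (bv q.succ) (U a q.succ))]
    exact hT a
  have hM : ∀ a b : Fin (m+1), (Uhat * G * Uhatᵀ) a b
      = c3 * (((if a = (0:Fin (m+1)) then (1:ℝ) else 0) - 1/n)
        * ((if b = (0:Fin (m+1)) then (1:ℝ) else 0) - 1/n)) := by
    intro a b
    have e : (Uhat * G * Uhatᵀ) a b = ∑ q, (∑ p, Uhat a p * G p q) * Uhat b q := by
      rw [Matrix.mul_apply]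
      exact Finset.sum_congr rfl fun q _ => by rw [Matrix.mul_apply, Matrix.transpose_apply]
    rw [e, bilin_eval (fun p => Uhat a p) (fun q => Uhat b q) G
      (fun p => c3 * bv p.succ) (fun _ => 0) (fun q => bv q.succ) (fun _ => 0) hG]
    simp only [Uhat, Matrix.of_apply, mul_zero, zero_mul, Finset.sum_const_zero, add_zero]
    rw [Finset.sum_congr rfl (fun p _ =>
      show U a p.succ * (c3 * bv p.succ) = c3 * (U a p.succ * bv p.succ) from by ring),
      ← Finset.mul_sum, hT a, hT' b]
    ring
  have hQδ : ∀ k : Fin m, Qδ k k = (1/η) * c3 := by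
    intro k
    have hk0 : (k.succ : Fin (m+1)) ≠ 0 := Fin.succ_ne_zero k
    have e : Qδ k k = ∑ i', (∑ i, C i k * ((1 / η) • (Uhat * G * Uhatᵀ)) i i') * C i' k := by
      simp only [Qδ]
      rw [Matrix.mul_apply]
      exact Finset.sum_congr rfl fun i' _ => by
        rw [Matrix.mul_apply]; simp only [Matrix.transpose_apply]
    have hform : ∀ i i' : Fin (m+1), ((1 / η) • (Uhat * G * Uhatᵀ)) i i'
        = ((1/η) * c3 * ((if i = (0:Fin (m+1)) then (1:ℝ) else 0) - 1/n))
          * ((if i' = (0:Fin (m+1)) then (1:ℝ) else 0) - 1/n) + 0 * (0:ℝ) := by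
      intro i i'
      simp only [Matrix.smul_apply, smul_eq_mul]
      rw [hM]
      ring
    rw [e, bilin_eval (fun i => C i k) (fun i' => C i' k) ((1 / η) • (Uhat * G * Uhatᵀ))
      (fun i => (1/η) * c3 * ((if i = (0:Fin (m+1)) then (1:ℝ) else 0) - 1/n))
      (fun _ => 0)
      (fun i' => (if i' = (0:Fin (m+1)) then (1:ℝ) else 0) - 1/n)
      (fun _ => 0) hform]
    simp only [mul_zero, zero_mul, Finset.sum_const_zero, add_zero]
    have hCY : ∀ (c : ℝ), ∑ i : Fin (m+1),
        C i k * (c * ((if i = (0:Fin (m+1)) then (1:ℝ) else 0) - 1/n)) = c := by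
      intro c
      have e2 : ∀ i : Fin (m+1), C i k * (c * ((if i = (0:Fin (m+1)) then (1:ℝ) else 0) - 1/n))
          = (if i = (0:Fin (m+1)) then c * (1 - 1/n) else 0)
            + (if i = k.succ then c * (1/n) else 0) := by
        intro i
        simp only [C, Matrix.of_apply]
        by_cases hi : i = 0
        · subst hi
          simp [Ne.symm hk0]
          try ring
        · by_cases hik : i = k.succ
          · subst hik
            simp [hi]
            try ring
          · simp [hi, hik]
            try ring
      rw [Finset.sum_congr rfl (fun i _ => e2 i), Finset.sum_add_distrib,
        Finset.sum_ite_eq' Finset.univ (0 : Fin (m+1)) (fun _ => c * (1 - 1/n)),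
        Finset.sum_ite_eq' Finset.univ (k.succ : Fin (m+1)) (fun _ => c * (1/n))]
      simp only [Finset.mem_univ, if_true]
      ring
    have hCY2 : ∑ i' : Fin (m+1),
        ((if i' = (0:Fin (m+1)) then (1:ℝ) else 0) - 1/n) * C i' k = 1 := by
      rw [Finset.sum_congr rfl (fun i' _ => mul_comm _ (C i' k))]
      have := hCY 1
      rw [Finset.sum_congr rfl (fun i _ =>
        show C i k * ((1:ℝ) * ((if i = (0:Fin (m+1)) then (1:ℝ) else 0) - 1/n))
          = C i k * ((if i = (0:Fin (m+1)) then (1:ℝ) else 0) - 1/n) from by ring)] at this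
      exact this
    rw [hCY ((1/η) * c3), hCY2]
    ring
  -- final assembly
  have hαval : α = d / η := rfl
  refine ⟨?_, ?_, ?_⟩
  · rw [hQω 0]
    norm_num
    rw [hc1, hc2, hμdef, hαval]
    linear_combination arith1 η d γ b1 n hη hd hγ hn
  · intro i hi
    rw [hQω i]
    simp only [if_neg hi]
    rw [hc1, hc2, hμdef, hαval]
    linear_combination arith2 η d γ b1 n hη hd hγ hn
  · intro k
    rw [hQδ k, hc3, hμdef, hαval]
    linear_combination arith3 η d γ b1 n hη hd hγ hn
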